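/- Let φ be a countable generalized shift on {0,1}^ℤ (or more generally A^ℤ) defined by data (P, J, H). Suppose φ 'modifies at infinity': there exist pairs p_k = (n_{i_k}, I_{i_k}) ∈ P and positions r_{i_k} ∈ {n_{i_k},...,n_{i_k}+m_{i_k}−1} with |r_{i_k}| → ∞ such that the symbol of I_{i_k} at position r_{i_k} differs from the symbol of J(p_k) at position r_{i_k}. Then the restriction φ|_{S_P} is not induced by any generalized shift; i.e., there is no generalized shift ψ with ψ(s) = φ(s) for all s ∈ S_P. -/
import Mathlib


/-- `s` coincides with the pair `p = (n, I)` if the symbols of `s` at positions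
`n, ..., n + |I| - 1` form the word `I`. -/
def Coincides {A : Type*} (s : ℤ → A) (p : ℤ × List A) : Prop :=
  ∀ (i : ℕ) (hi : i < p.2.length), s (p.1 + i) = p.2.get ⟨i, hi⟩

/-- The set of sequences coinciding with some pair of `P`. -/
def SP {A : Type*} (P : Set (ℤ × List A)) : Set (ℤ → A) :=
  {s | ∃ p ∈ P, Coincides s p}

/-- Every sequence coincides with at most one pair of `P`
(the defining condition of a countable generalized shift). -/
def AtMostOne {A : Type*} (P : Set (ℤ × List A)) : Prop :=
  ∀ s : ℤ → A, ∀ p ∈ P, ∀ q ∈ P, Coincides s p → Coincides s q → p = q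

/-- Replace the symbols of `s` at positions `n, ..., n + |w| - 1` by the word `w`. -/
noncomputable def replaceWord {A : Type*} (s : ℤ → A) (n : ℤ) (w : List A) : ℤ → A :=
  fun k => if h : 0 ≤ k - n ∧ (k - n).toNat < w.length
    then w.get ⟨(k - n).toNat, h.2⟩ else s k

open scoped Classical in
/-- The countable generalized shift determined by the data `(P, J, H)`: if `s`
coincides with a (necessarily unique, when `AtMostOne P` holds) pair `p ∈ P`, replace
the word of `p` in `s` by `J p` and shift by `H p` (position `k` of the image is
position `k + H p` of the replaced sequence); otherwise leave `s` unchanged. -/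
noncomputable def cgsApply {A : Type*} (P : Set (ℤ × List A)) (J : ℤ × List A → List A)
    (H : ℤ × List A → ℤ) (s : ℤ → A) : ℤ → A :=
  if h : ∃ p ∈ P, Coincides s p then
    fun k => replaceWord s h.choose.1 (J h.choose) (k + H h.choose)
  else s

lemma replaceWord_mem {A : Type*} (s : ℤ → A) (n : ℤ) (w : List A)
    (i : ℕ) (hi : i < w.length) :
    replaceWord s n w (n + i) = w.get ⟨i, hi⟩ := by
  simp only [replaceWord]
  have h1 : n + (i:ℤ) - n = (i:ℤ) := by ring
  simp only [h1, Int.toNat_natCast]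
  simp [hi]

lemma replaceWord_not_mem {A : Type*} (s : ℤ → A) (n : ℤ) (w : List A) (k : ℤ)
    (h : k < n ∨ n + w.length ≤ k) :
    replaceWord s n w k = s k := by
  simp only [replaceWord]
  rw [dif_neg (by omega)]

lemma cgsApply_eq {A : Type*} (P : Set (ℤ × List A)) (J : ℤ × List A → List A)
    (H : ℤ × List A → ℤ) (hone : AtMostOne P) (s : ℤ → A) (p : ℤ × List A)
    (hp : p ∈ P) (hc : Coincides s p) :
    cgsApply P J H s = fun k => replaceWord s p.1 (J p) (k + H p) := by
  have h : ∃ q ∈ P, Coincides s q := ⟨p, hp, hc⟩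
  rw [cgsApply, dif_pos h]
  obtain ⟨hq, hcq⟩ := h.choose_spec
  have heq : h.choose = p := hone s _ hq p hp hcq hc
  rw [heq]

theorem modifies_at_infinity_not_generalizedShift {A : Type*}
    (z o : A) (hzo : z ≠ o)
    (P : Set (ℤ × List A)) (J : ℤ × List A → List A) (H : ℤ × List A → ℤ)
    (hone : AtMostOne P)
    (hJlen : ∀ p ∈ P, (J p).length = p.2.length)
    (hmod : ∀ M : ℕ, ∃ p ∈ P, ∃ i : ℕ, ∃ hi : i < p.2.length,
      (M : ℤ) ≤ |p.1 + (i : ℤ)| ∧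
      ∃ hi' : i < (J p).length, p.2.get ⟨i, hi⟩ ≠ (J p).get ⟨i, hi'⟩) :
    ¬ ∃ (DG DF : Finset ℤ) (G : (ℤ → A) → (ℤ → A)) (F : (ℤ → A) → ℤ),
      (∀ (s : ℤ → A) (k : ℤ), k ∉ DG → G s k = s k) ∧
      (∀ s t : ℤ → A, (∀ k ∈ DG, s k = t k) → ∀ k ∈ DG, G s k = G t k) ∧
      (∀ s t : ℤ → A, (∀ k ∈ DF, s k = t k) → F s = F t) ∧
      (∀ s ∈ SP P, (fun k => G s (k + F s)) = cgsApply P J H s) := by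
  rintro ⟨DG, DF, G, F, hG1, _, hF, hEq⟩
  -- Bound on DG
  set M : ℕ := DG.sup Int.natAbs + 1 with hM
  obtain ⟨p, hp, i, hi, hri, hi', hne⟩ := hmod M
  set r : ℤ := p.1 + i with hr
  have hrDG : r ∉ DG := by
    intro hmem
    have h1 : r.natAbs ≤ DG.sup Int.natAbs := Finset.le_sup hmem
    have h2 : (M : ℤ) ≤ |r| := hri
    rw [Int.abs_eq_natAbs] at h2
    omega
  -- the base sequence
  set s0 : ℤ → A := replaceWord (fun _ => z) p.1 p.2 with hs0
  have hc0 : Coincides s0 p := by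
    intro j hj
    exact replaceWord_mem _ _ _ j hj
  -- key equation for any sequence coinciding with p and agreeing with s0 on DF
  have key : ∀ s : ℤ → A, Coincides s p → ∀ k : ℤ,
      G s k = replaceWord s p.1 (J p) (k - F s + H p) := by
    intro s hc k
    have h := hEq s ⟨p, hp, hc⟩
    rw [cgsApply_eq P J H hone s p hp hc] at h
    have := congrFun h (k - F s)
    simpa using this
  set d : ℤ := H p - F s0 with hd
  by_cases hd0 : d = 0
  · -- case d = 0 : look at position r
    have h1 : G s0 r = replaceWord s0 p.1 (J p) (r - F s0 + H p) := key s0 hc0 r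
    have h2 : r - F s0 + H p = r := by omega
    rw [h2] at h1
    rw [hG1 s0 r hrDG] at h1
    have h3 : replaceWord s0 p.1 (J p) (p.1 + i) = (J p).get ⟨i, hi'⟩ :=
      replaceWord_mem _ _ _ i hi'
    rw [hr] at h1
    rw [h3] at h1
    exact hne ((hc0 i hi).symm.trans h1)
  · -- case d ≠ 0 : marker argument
    set B : ℕ := (DG ∪ DF).sup Int.natAbs with hB
    set q : ℤ := max ((B : ℤ) + 1) (max (p.1 + p.2.length) (p.1 + p.2.length - d)) with hq
    have hqB : (B : ℤ) < q := lt_of_lt_of_le (by omega) (le_max_left _ _)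
    have hqW : p.1 + p.2.length ≤ q := le_trans (le_max_left _ _) (le_max_right _ _)
    have hqdW : p.1 + p.2.length ≤ q + d := by
      have : p.1 + p.2.length - d ≤ q := le_trans (le_max_right _ _) (le_max_right _ _)
      omega
    have hqDG : q ∉ DG := by
      intro hmem
      have : q.natAbs ≤ B := Finset.le_sup (Finset.mem_union_left _ hmem)
      omega
    have hqDF : q ∉ DF := by
      intro hmem
      have : q.natAbs ≤ B := Finset.le_sup (Finset.mem_union_right _ hmem)
      omega
    set t : ℤ → A := fun k => if k = q then o else s0 k with ht
    have hct : Coincides t p := by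
      intro j hj
      have hne : p.1 + (j : ℤ) ≠ q := by omega
      simp only [ht, if_neg hne]
      exact hc0 j hj
    have hFt : F t = F s0 := by
      apply hF
      intro k hk
      have : k ≠ q := fun h => hqDF (h ▸ hk)
      simp [ht, this]
    have h1 : G t q = replaceWord t p.1 (J p) (q - F t + H p) := key t hct q
    rw [hG1 t q hqDG, hFt] at h1
    have h2 : q - F s0 + H p = q + d := by omega
    rw [h2] at h1
    have h3 : replaceWord t p.1 (J p) (q + d) = t (q + d) := by
      apply replaceWord_not_mem
      right
      rw [hJlen p hp]
      omega
    rw [h3] at h1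
    have h4 : t q = o := by simp [ht]
    have h5 : t (q + d) = z := by
      have hne1 : q + d ≠ q := by omega
      simp only [ht, if_neg hne1]
      apply replaceWord_not_mem
      right
      omega
    rw [h4, h5] at h1
    exact hzo h1.symm
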